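/- Let $X_1,\dots,X_n$ be negatively associated random variables with $a_i \le X_i \le b_i$ almost surely, and $S_n = X_1 + \cdots + X_n$. Then for all $t > 0$, $\Pr[|S_n - \mathbb{E}[S_n]| \ge t] \le 2\exp\left(-\frac{2t^2}{\sum_{i=1}^n (b_i - a_i)^2}\right)$. -/

import Mathlib

open MeasureTheory

/-- Negative association (see paper, Definition 3.5). -/
def NegAssoc {Ω ι : Type*} [MeasurableSpace Ω] (μ : Measure Ω) (X : ι → Ω → ℝ) : Prop :=
  ∀ (I J : Finset ι), Disjoint I J →
    ∀ (f : (I → ℝ) → ℝ) (g : (J → ℝ) → ℝ),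
      ((Monotone f ∧ Monotone g) ∨ (Antitone f ∧ Antitone g)) →
      Measurable f → Measurable g →
      ∫ ω, f (fun i => X i ω) * g (fun j => X j ω) ∂μ ≤
        (∫ ω, f (fun i => X i ω) ∂μ) * ∫ ω, g (fun j => X j ω) ∂μ

open Real

lemma aux_phi_pos {p : ℝ} (hp0 : 0 ≤ p) (hp1 : p ≤ 1) (x : ℝ) :
    0 < 1 - p + p * Real.exp x := by
  rcases hp0.eq_or_lt with h | h
  · simp [← h]
  · have := mul_pos h (Real.exp_pos x)
    nlinarith

lemma aux_L_le (p : ℝ) (hp0 : 0 ≤ p) (hp1 : p ≤ 1) (h : ℝ) :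
    -(p * h) + Real.log (1 - p + p * Real.exp h) ≤ h ^ 2 / 8 := by
  set φ : ℝ → ℝ := fun x => 1 - p + p * Real.exp x with hφdef
  have hφ : ∀ x, 0 < φ x := fun x => aux_phi_pos hp0 hp1 x
  set g : ℝ → ℝ := fun x => x ^ 2 / 8 + p * x - Real.log (φ x) with hgdef
  set G : ℝ → ℝ := fun x => x / 4 + p - p * Real.exp x / φ x with hGdef
  have hφ' : ∀ x, HasDerivAt φ (p * Real.exp x) x := by
    intro x
    exact ((Real.hasDerivAt_exp x).const_mul p).const_add (1 - p)
  have hg : ∀ x, HasDerivAt g (G x) x := by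
    intro x
    have h1 : HasDerivAt (fun x : ℝ => x ^ 2 / 8) (x / 4) x := by
      have := (hasDerivAt_pow 2 x).div_const 8
      convert this using 1
      · rfl
      · rfl
      · norm_num
        ring
    have h2 : HasDerivAt (fun x : ℝ => p * x) p x := by
      simpa using (hasDerivAt_id x).const_mul p
    have h3 : HasDerivAt (fun x => Real.log (φ x)) (p * Real.exp x / φ x) x :=
      (hφ' x).log (hφ x).ne'
    exact (h1.add h2).sub h3
  have hG : ∀ x, HasDerivAt G
      (1 / 4 - (p * Real.exp x * φ x - p * Real.exp x * (p * Real.exp x)) / (φ x) ^ 2) x := by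
    intro x
    have h1 : HasDerivAt (fun x : ℝ => x / 4 + p) (1 / 4) x := by
      simpa using ((hasDerivAt_id x).div_const 4).add_const p
    have h2 : HasDerivAt (fun x => p * Real.exp x / φ x)
        ((p * Real.exp x * φ x - p * Real.exp x * (p * Real.exp x)) / (φ x) ^ 2) x :=
      ((Real.hasDerivAt_exp x).const_mul p).div (hφ' x) (hφ x).ne'
    exact h1.sub h2
  have hGderiv_nonneg : ∀ x, 0 ≤ 1 / 4 -
      (p * Real.exp x * φ x - p * Real.exp x * (p * Real.exp x)) / (φ x) ^ 2 := by
    intro x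
    rw [sub_nonneg, div_le_iff₀ (pow_pos (hφ x) 2)]
    have hx := (Real.exp_pos x).le
    have hφx : φ x = 1 - p + p * Real.exp x := rfl
    nlinarith [sq_nonneg (1 - p - p * Real.exp x), mul_nonneg hp0 hx]
  have hGmono : Monotone G :=
    monotone_of_deriv_nonneg (fun x => (hG x).differentiableAt)
      (fun x => by rw [(hG x).deriv]; exact hGderiv_nonneg x)
  have hG0 : G 0 = 0 := by
    simp only [hGdef, hφdef, Real.exp_zero, mul_one]
    have : 1 - p + p = 1 := by ring
    rw [this]
    norm_num
  have hg0 : g 0 = 0 := by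
    simp only [hgdef, hφdef, Real.exp_zero, mul_one]
    norm_num
  have key : 0 ≤ g h := by
    rcases le_or_gt 0 h with hh | hh
    · have hmono : MonotoneOn g (Set.Ici 0) := by
        apply monotoneOn_of_deriv_nonneg (convex_Ici 0)
          (Continuous.continuousOn (continuous_iff_continuousAt.mpr
            fun x => (hg x).differentiableAt.continuousAt))
        · intro x _
          exact (hg x).differentiableAt.differentiableWithinAt
        · intro x hx
          rw [(hg x).deriv]
          rw [interior_Ici] at hx
          have := hGmono (le_of_lt hx)
          rw [hG0] at this
          exact this
      have := hmono Set.self_mem_Ici (Set.mem_Ici.mpr hh) hh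
      rwa [hg0] at this
    · have hanti : AntitoneOn g (Set.Iic 0) := by
        apply antitoneOn_of_deriv_nonpos (convex_Iic 0)
          (Continuous.continuousOn (continuous_iff_continuousAt.mpr
            fun x => (hg x).differentiableAt.continuousAt))
        · intro x _
          exact (hg x).differentiableAt.differentiableWithinAt
        · intro x hx
          rw [(hg x).deriv]
          rw [interior_Iic] at hx
          have := hGmono (le_of_lt hx)
          rw [hG0] at this
          exact this
      have := hanti (Set.mem_Iic.mpr hh.le) Set.self_mem_Iic hh.le
      rwa [hg0] at this
  have : g h = h ^ 2 / 8 + p * h - Real.log (1 - p + p * Real.exp h) := rfl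
  linarith [key, this ▸ key]

lemma integrable_of_bdd {Ω : Type*} [MeasurableSpace Ω] {μ : Measure Ω} [IsFiniteMeasure μ]
    {f : Ω → ℝ} (hf : AEStronglyMeasurable f μ) {C : ℝ} (h : ∀ᵐ ω ∂μ, |f ω| ≤ C) :
    Integrable f μ :=
  (integrable_const C).mono' hf (by simpa [Real.norm_eq_abs] using h)

lemma integrable_exp_of_bdd {Ω : Type*} [MeasurableSpace Ω] {μ : Measure Ω} [IsFiniteMeasure μ]
    {Y : Ω → ℝ} (hY : Measurable Y) {c d : ℝ} (hcd : ∀ᵐ ω ∂μ, Y ω ∈ Set.Icc c d) (l : ℝ) :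
    Integrable (fun ω => Real.exp (l * Y ω)) μ := by
  apply integrable_of_bdd (C := Real.exp (|l| * (|c| + |d|)))
    ((hY.const_mul l).exp.aestronglyMeasurable)
  filter_upwards [hcd] with ω hω
  rw [abs_of_pos (Real.exp_pos _)]
  apply Real.exp_le_exp.mpr
  have h1 : |Y ω| ≤ |c| + |d| := by
    rw [abs_le]
    constructor
    · have := neg_abs_le c; linarith [hω.1, abs_nonneg d]
    · have := le_abs_self d; linarith [hω.2, abs_nonneg c]
  calc l * Y ω ≤ |l * Y ω| := le_abs_self _
    _ = |l| * |Y ω| := abs_mul _ _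
    _ ≤ |l| * (|c| + |d|) := by
        exact mul_le_mul_of_nonneg_left h1 (abs_nonneg l)

lemma integrable_of_Icc {Ω : Type*} [MeasurableSpace Ω] {μ : Measure Ω} [IsFiniteMeasure μ]
    {Y : Ω → ℝ} (hY : Measurable Y) {c d : ℝ} (hcd : ∀ᵐ ω ∂μ, Y ω ∈ Set.Icc c d) :
    Integrable Y μ := by
  apply integrable_of_bdd (C := |c| + |d|) hY.aestronglyMeasurable
  filter_upwards [hcd] with ω hω
  rw [abs_le]
  constructor
  · have := neg_abs_le c; linarith [hω.1, abs_nonneg d]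
  · have := le_abs_self d; linarith [hω.2, abs_nonneg c]

/-- Hoeffding's lemma, centered version. -/
lemma hoeffding_mgf {Ω : Type*} [MeasurableSpace Ω] (μ : Measure Ω) [IsProbabilityMeasure μ]
    {Y : Ω → ℝ} (hY : Measurable Y) {c d : ℝ} (hcd : ∀ᵐ ω ∂μ, Y ω ∈ Set.Icc c d)
    (hmean : ∫ ω, Y ω ∂μ = 0) (l : ℝ) :
    ∫ ω, Real.exp (l * Y ω) ∂μ ≤ Real.exp (l ^ 2 * (d - c) ^ 2 / 8) := by
  have hYint : Integrable Y μ := integrable_of_Icc hY hcd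
  have hc : c ≤ 0 := by
    have h1 : ∫ ω, (c : ℝ) ∂μ ≤ ∫ ω, Y ω ∂μ :=
      integral_mono_ae (integrable_const c) hYint (hcd.mono fun ω h => h.1)
    simpa [hmean] using h1
  have hd : 0 ≤ d := by
    have h1 : ∫ ω, Y ω ∂μ ≤ ∫ ω, (d : ℝ) ∂μ :=
      integral_mono_ae hYint (integrable_const d) (hcd.mono fun ω h => h.2)
    simpa [hmean] using h1
  rcases eq_or_lt_of_le (hc.trans hd) with hcd0 | hcdlt
  · -- c = d = 0
    have hc0 : c = 0 := le_antisymm hc (by rw [hcd0]; exact hd)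
    have hd0 : d = 0 := by rw [← hcd0, hc0]
    have hY0 : ∀ᵐ ω ∂μ, Y ω = 0 := by
      filter_upwards [hcd] with ω hω
      rw [hc0] at hω; rw [hd0] at hω
      exact le_antisymm hω.2 hω.1
    have : ∫ ω, Real.exp (l * Y ω) ∂μ = 1 := by
      rw [integral_congr_ae (g := fun _ => (1:ℝ)) (hY0.mono fun ω h => by simp [h])]
      simp
    rw [this, hc0, hd0]
    simp
  · -- c < d
    set p : ℝ := -c / (d - c) with hp
    have hdc : (0:ℝ) < d - c := by linarith
    have hp0 : 0 ≤ p := div_nonneg (by linarith) hdc.le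
    have hp1 : p ≤ 1 := by
      rw [div_le_one hdc]; linarith
    set A : ℝ := (d * Real.exp (l * c) - c * Real.exp (l * d)) / (d - c) with hA
    set B : ℝ := (Real.exp (l * d) - Real.exp (l * c)) / (d - c) with hB
    have hconv : ∀ᵐ ω ∂μ, Real.exp (l * Y ω) ≤ A + B * Y ω := by
      filter_upwards [hcd] with ω hω
      set y := Y ω
      have hu : 0 ≤ (d - y) / (d - c) := div_nonneg (by linarith [hω.2]) hdc.le
      have hv : 0 ≤ (y - c) / (d - c) := div_nonneg (by linarith [hω.1]) hdc.le
      have huv : (d - y) / (d - c) + (y - c) / (d - c) = 1 := by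
        field_simp
        ring
      have hc2 := convexOn_exp.2 (Set.mem_univ (l * c)) (Set.mem_univ (l * d)) hu hv huv
      simp only [smul_eq_mul] at hc2
      have heq : (d - y) / (d - c) * (l * c) + (y - c) / (d - c) * (l * d) = l * y := by
        field_simp
        ring
      rw [heq] at hc2
      calc Real.exp (l * y) ≤ (d - y) / (d - c) * Real.exp (l * c)
            + (y - c) / (d - c) * Real.exp (l * d) := hc2
        _ = A + B * y := by rw [hA, hB]; field_simp; ring
    have hintexp : Integrable (fun ω => Real.exp (l * Y ω)) μ := integrable_exp_of_bdd hY hcd l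
    have hintRHS : Integrable (fun ω => A + B * Y ω) μ :=
      (integrable_const A).add (hYint.const_mul B)
    have hle : ∫ ω, Real.exp (l * Y ω) ∂μ ≤ A := by
      have := integral_mono_ae hintexp hintRHS hconv
      rwa [integral_add (integrable_const A) (hYint.const_mul B), integral_const_mul,
        hmean, mul_zero, add_zero, integral_const, probReal_univ,
        one_smul] at this
    have hAeq : A = Real.exp (l * c) * (1 - p + p * Real.exp (l * (d - c))) := by
      rw [hA, hp]
      rw [show l * d = l * c + l * (d - c) by ring, Real.exp_add]
      field_simp
      ring
    have hq : 0 < 1 - p + p * Real.exp (l * (d - c)) := by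
      rcases hp0.eq_or_lt with h | h
      · simp [← h]
      · nlinarith [Real.exp_pos (l * (d - c)), mul_pos h (Real.exp_pos (l * (d - c)))]
    have hlc : l * c = -(p * (l * (d - c))) := by
      rw [hp]; field_simp
    have hAexp : A = Real.exp (-(p * (l * (d - c))) + Real.log (1 - p + p * Real.exp (l * (d - c)))) := by
      rw [hAeq, Real.exp_add, Real.exp_log hq, hlc]
    have hfinal : A ≤ Real.exp ((l * (d - c)) ^ 2 / 8) := by
      rw [hAexp]
      exact Real.exp_le_exp.mpr (aux_L_le p hp0 hp1 (l * (d - c)))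
    calc ∫ ω, Real.exp (l * Y ω) ∂μ ≤ A := hle
      _ ≤ Real.exp ((l * (d - c)) ^ 2 / 8) := hfinal
      _ = Real.exp (l ^ 2 * (d - c) ^ 2 / 8) := by rw [mul_pow]

/-- Hoeffding's lemma, uncentered. -/
lemma hoeffding_mgf' {Ω : Type*} [MeasurableSpace Ω] (μ : Measure Ω) [IsProbabilityMeasure μ]
    {Y : Ω → ℝ} (hY : Measurable Y) {c d : ℝ} (hcd : ∀ᵐ ω ∂μ, Y ω ∈ Set.Icc c d) (l : ℝ) :
    ∫ ω, Real.exp (l * Y ω) ∂μ ≤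
      Real.exp (l * ∫ ω, Y ω ∂μ + l ^ 2 * (d - c) ^ 2 / 8) := by
  set m := ∫ ω, Y ω ∂μ with hm
  have hYint : Integrable Y μ := integrable_of_Icc hY hcd
  have hmean : ∫ ω, (Y ω - m) ∂μ = 0 := by
    rw [integral_sub hYint (integrable_const m), integral_const, probReal_univ,
      one_smul, sub_self]
  have hbd : ∀ᵐ ω ∂μ, Y ω - m ∈ Set.Icc (c - m) (d - m) := by
    filter_upwards [hcd] with ω hω
    exact ⟨by linarith [hω.1], by linarith [hω.2]⟩
  have hkey := hoeffding_mgf μ (Y := fun ω => Y ω - m) (hY.sub measurable_const) hbd hmean l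
  have heq : ∫ ω, Real.exp (l * (Y ω - m)) ∂μ
      = (∫ ω, Real.exp (l * Y ω) ∂μ) * Real.exp (-(l * m)) := by
    simp_rw [mul_sub, Real.exp_sub]
    rw [integral_div]
    rw [div_eq_mul_inv, ← Real.exp_neg]
  rw [heq] at hkey
  have hd2 : (d - m) - (c - m) = d - c := by ring
  rw [hd2] at hkey
  have hpos := Real.exp_pos (-(l * m))
  calc ∫ ω, Real.exp (l * Y ω) ∂μ
      = ((∫ ω, Real.exp (l * Y ω) ∂μ) * Real.exp (-(l * m))) * Real.exp (l * m) := by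
        rw [mul_assoc, ← Real.exp_add, neg_add_cancel, Real.exp_zero, mul_one]
    _ ≤ Real.exp (l ^ 2 * (d - c) ^ 2 / 8) * Real.exp (l * m) :=
        mul_le_mul_of_nonneg_right hkey (Real.exp_pos _).le
    _ = Real.exp (l * m + l ^ 2 * (d - c) ^ 2 / 8) := by rw [← Real.exp_add]; ring_nf

lemma negAssoc_neg {Ω ι : Type*} [MeasurableSpace Ω] {μ : Measure Ω} {X : ι → Ω → ℝ}
    (h : NegAssoc μ X) : NegAssoc μ (fun i ω => -X i ω) := by
  intro I J hIJ f g hmono hf hg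
  have hnegI : Measurable (fun x : I → ℝ => -x) :=
    measurable_pi_lambda _ fun i => (measurable_pi_apply i).neg
  have hnegJ : Measurable (fun x : J → ℝ => -x) :=
    measurable_pi_lambda _ fun j => (measurable_pi_apply j).neg
  have hmono' : ((Monotone (fun x : I → ℝ => f (-x)) ∧ Monotone (fun x : J → ℝ => g (-x))) ∨
      (Antitone (fun x : I → ℝ => f (-x)) ∧ Antitone (fun x : J → ℝ => g (-x)))) := by
    rcases hmono with ⟨h1, h2⟩ | ⟨h1, h2⟩
    · exact Or.inr ⟨fun x y hxy => h1 (neg_le_neg hxy), fun x y hxy => h2 (neg_le_neg hxy)⟩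
    · exact Or.inl ⟨fun x y hxy => h1 (neg_le_neg hxy), fun x y hxy => h2 (neg_le_neg hxy)⟩
  have := h I J hIJ (fun x => f (-x)) (fun x => g (-x)) hmono'
    (hf.comp hnegI) (hg.comp hnegJ)
  have heqI : ∀ ω, (-(fun i : I => X i ω)) = fun i : I => -X i ω := fun ω => rfl
  have heqJ : ∀ ω, (-(fun j : J => X j ω)) = fun j : J => -X j ω := fun ω => rfl
  simpa [heqI, heqJ] using this

lemma mgf_sum_le {Ω : Type*} [MeasurableSpace Ω] (μ : Measure Ω) [IsProbabilityMeasure μ]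
    {n : ℕ} {X : Fin n → Ω → ℝ} (hmeas : ∀ i, Measurable (X i))
    (hNA : NegAssoc μ X) (l : ℝ) (s : Finset (Fin n)) :
    ∫ ω, Real.exp (l * ∑ i ∈ s, X i ω) ∂μ ≤ ∏ i ∈ s, ∫ ω, Real.exp (l * X i ω) ∂μ := by
  classical
  induction s using Finset.induction_on with
  | empty => simp
  | @insert j s hj IH =>
    set f : (↥s → ℝ) → ℝ := fun x => Real.exp (l * ∑ i, x i) with hfdef
    set g : (↥({j} : Finset (Fin n)) → ℝ) → ℝ :=
      fun x => Real.exp (l * x ⟨j, Finset.mem_singleton_self j⟩) with hgdef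
    have hfm : Measurable f :=
      (Finset.univ.measurable_sum fun i _ => measurable_pi_apply i).const_mul l |>.exp
    have hgm : Measurable g := by rw [hgdef]; fun_prop
    have hmono : ((Monotone f ∧ Monotone g) ∨ (Antitone f ∧ Antitone g)) := by
      rcases le_or_gt 0 l with hl | hl
      · left
        constructor
        · intro x y hxy
          exact Real.exp_le_exp.mpr (mul_le_mul_of_nonneg_left
            (Finset.sum_le_sum fun i _ => hxy i) hl)
        · intro x y hxy
          exact Real.exp_le_exp.mpr (mul_le_mul_of_nonneg_left (hxy _) hl)
      · right
        constructor
        · intro x y hxy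
          exact Real.exp_le_exp.mpr (mul_le_mul_of_nonpos_left
            (Finset.sum_le_sum fun i _ => hxy i) hl.le)
        · intro x y hxy
          exact Real.exp_le_exp.mpr (mul_le_mul_of_nonpos_left (hxy _) hl.le)
    have key := hNA s {j} (Finset.disjoint_singleton_right.mpr hj) f g hmono hfm hgm
    have hfeq : ∀ ω, f (fun i : ↥s => X i ω)
        = Real.exp (l * ∑ i ∈ s, X i ω) := by
      intro ω
      simp only [hfdef]
      rw [Finset.sum_coe_sort s (fun i => X i ω)]
    have hgeq : ∀ ω, g (fun i : ↥({j} : Finset (Fin n)) => X i ω)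
        = Real.exp (l * X j ω) := fun ω => rfl
    simp only [hfeq, hgeq, ← Real.exp_add, ← mul_add] at key
    have hsum : ∀ ω, ∑ i ∈ s, X i ω + X j ω = ∑ i ∈ insert j s, X i ω := by
      intro ω
      rw [Finset.sum_insert hj]
      ring
    simp only [hsum] at key
    calc ∫ ω, Real.exp (l * ∑ i ∈ insert j s, X i ω) ∂μ
        ≤ (∫ ω, Real.exp (l * ∑ i ∈ s, X i ω) ∂μ) * ∫ ω, Real.exp (l * X j ω) ∂μ := key
      _ ≤ (∏ i ∈ s, ∫ ω, Real.exp (l * X i ω) ∂μ) * ∫ ω, Real.exp (l * X j ω) ∂μ :=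
          mul_le_mul_of_nonneg_right IH (integral_nonneg fun ω => (Real.exp_pos _).le)
      _ = ∏ i ∈ insert j s, ∫ ω, Real.exp (l * X i ω) ∂μ := by
          rw [Finset.prod_insert hj, mul_comm]

lemma one_sided {Ω : Type*} [MeasurableSpace Ω] (μ : Measure Ω)
    [IsProbabilityMeasure μ] (n : ℕ) (X : Fin n → Ω → ℝ) (a b : Fin n → ℝ)
    (hmeas : ∀ i, Measurable (X i))
    (hbdd : ∀ i, ∀ᵐ ω ∂μ, a i ≤ X i ω ∧ X i ω ≤ b i)
    (hNA : NegAssoc μ X) (t : ℝ) (ht : 0 < t) (hD : 0 < ∑ i, (b i - a i) ^ 2) :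
    (μ {ω | t ≤ (∑ i, X i ω) - ∫ ω', ∑ i, X i ω' ∂μ}).toReal ≤
      Real.exp (-(2 * t ^ 2 / ∑ i, (b i - a i) ^ 2)) := by
  set D := ∑ i, (b i - a i) ^ 2 with hDdef
  set lam := 4 * t / D with hlam
  have hlam0 : 0 < lam := by positivity
  have hbdd' : ∀ i, ∀ᵐ ω ∂μ, X i ω ∈ Set.Icc (a i) (b i) := fun i =>
    (hbdd i).mono fun ω h => Set.mem_Icc.mpr h
  have hSmeas : Measurable (fun ω => ∑ i, X i ω) :=
    Finset.univ.measurable_sum fun i _ => hmeas i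
  have hSbdd : ∀ᵐ ω ∂μ, (∑ i, X i ω) ∈ Set.Icc (∑ i, a i) (∑ i, b i) := by
    have hall : ∀ᵐ ω ∂μ, ∀ i, a i ≤ X i ω ∧ X i ω ≤ b i := ae_all_iff.mpr hbdd
    filter_upwards [hall] with ω hω
    exact ⟨Finset.sum_le_sum fun i _ => (hω i).1, Finset.sum_le_sum fun i _ => (hω i).2⟩
  set m := ∫ ω', ∑ i, X i ω' ∂μ with hm
  have hSm_bdd : ∀ᵐ ω ∂μ, (∑ i, X i ω) - m ∈ Set.Icc ((∑ i, a i) - m) ((∑ i, b i) - m) :=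
    hSbdd.mono fun ω h => ⟨by linarith [h.1], by linarith [h.2]⟩
  have hint : Integrable (fun ω => Real.exp (lam * ((∑ i, X i ω) - m))) μ :=
    integrable_exp_of_bdd (hSmeas.sub measurable_const) hSm_bdd lam
  have hch := ProbabilityTheory.measure_ge_le_exp_mul_mgf (μ := μ)
    (X := fun ω => (∑ i, X i ω) - m) t hlam0.le hint
  have hmgf : ProbabilityTheory.mgf (fun ω => (∑ i, X i ω) - m) μ lam
      = (∫ ω, Real.exp (lam * ∑ i, X i ω) ∂μ) * Real.exp (-(lam * m)) := by
    have h1 : ProbabilityTheory.mgf (fun ω => (∑ i, X i ω) - m) μ lam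
        = ∫ ω, Real.exp (lam * ((∑ i, X i ω) - m)) ∂μ := rfl
    rw [h1]
    simp_rw [mul_sub, Real.exp_sub]
    rw [integral_div, div_eq_mul_inv, ← Real.exp_neg]
  have hm_sum : m = ∑ i, ∫ ω, X i ω ∂μ := by
    rw [hm]
    exact integral_finset_sum _ fun i _ => integrable_of_Icc (hmeas i) (hbdd' i)
  have hprod : ∫ ω, Real.exp (lam * ∑ i, X i ω) ∂μ
      ≤ Real.exp (lam * m + lam ^ 2 * D / 8) := by
    calc ∫ ω, Real.exp (lam * ∑ i, X i ω) ∂μ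
        ≤ ∏ i, ∫ ω, Real.exp (lam * X i ω) ∂μ := mgf_sum_le μ hmeas hNA lam Finset.univ
      _ ≤ ∏ i, Real.exp (lam * (∫ ω, X i ω ∂μ) + lam ^ 2 * (b i - a i) ^ 2 / 8) :=
          Finset.prod_le_prod (fun i _ => integral_nonneg fun ω => (Real.exp_pos _).le)
            (fun i _ => hoeffding_mgf' μ (hmeas i) (hbdd' i) lam)
      _ = Real.exp (∑ i, (lam * (∫ ω, X i ω ∂μ) + lam ^ 2 * (b i - a i) ^ 2 / 8)) :=
          (Real.exp_sum _ _).symm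
      _ = Real.exp (lam * m + lam ^ 2 * D / 8) := by
          rw [Finset.sum_add_distrib, ← Finset.mul_sum, ← hm_sum, ← Finset.sum_div,
            ← Finset.mul_sum, ← hDdef]
  calc (μ {ω | t ≤ (∑ i, X i ω) - m}).toReal
      ≤ Real.exp (-lam * t) * ProbabilityTheory.mgf (fun ω => (∑ i, X i ω) - m) μ lam := hch
    _ ≤ Real.exp (-lam * t) * (Real.exp (lam * m + lam ^ 2 * D / 8) * Real.exp (-(lam * m))) := by
        rw [hmgf]
        exact mul_le_mul_of_nonneg_left
          (mul_le_mul_of_nonneg_right hprod (Real.exp_pos _).le) (Real.exp_pos _).le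
    _ = Real.exp (-(2 * t ^ 2 / D)) := by
        rw [← Real.exp_add, ← Real.exp_add]
        congr 1
        rw [hlam]
        field_simp
        ring

/-- Hoeffding's inequality for negatively associated bounded random variables. -/
theorem hoeffding_negAssoc {Ω : Type*} [MeasurableSpace Ω] (μ : Measure Ω)
    [IsProbabilityMeasure μ] (n : ℕ) (X : Fin n → Ω → ℝ) (a b : Fin n → ℝ)
    (hmeas : ∀ i, Measurable (X i))
    (hbdd : ∀ i, ∀ᵐ ω ∂μ, a i ≤ X i ω ∧ X i ω ≤ b i)
    (hNA : NegAssoc μ X) (t : ℝ) (ht : 0 < t) :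
    (μ {ω | t ≤ |(∑ i, X i ω) - ∫ ω', ∑ i, X i ω' ∂μ|}).toReal ≤
      2 * Real.exp (-(2 * t ^ 2 / ∑ i, (b i - a i) ^ 2)) := by
  have hD0 : 0 ≤ ∑ i, (b i - a i) ^ 2 := Finset.sum_nonneg fun i _ => sq_nonneg _
  rcases hD0.eq_or_lt with hD | hD
  · -- degenerate case
    rw [← hD, div_zero, neg_zero, Real.exp_zero, mul_one]
    have h1 : (μ {ω | t ≤ |(∑ i, X i ω) - ∫ ω', ∑ i, X i ω' ∂μ|}).toReal ≤ 1 := by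
      simpa using ENNReal.toReal_mono ENNReal.one_ne_top prob_le_one
    linarith
  · have hupper := one_sided μ n X a b hmeas hbdd hNA t ht hD
    have hDeq : ∑ i, (-(a i) - -(b i)) ^ 2 = ∑ i, (b i - a i) ^ 2 :=
      Finset.sum_congr rfl fun i _ => by ring
    have hlower := one_sided μ n (fun i ω => -X i ω) (fun i => -(b i)) (fun i => -(a i))
      (fun i => (hmeas i).neg)
      (fun i => (hbdd i).mono fun ω h => ⟨neg_le_neg h.2, neg_le_neg h.1⟩)
      (negAssoc_neg hNA) t ht (by rw [hDeq]; exact hD)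
    rw [hDeq] at hlower
    set m := ∫ ω', ∑ i, X i ω' ∂μ with hm
    have hmneg : ∫ ω', ∑ i, -X i ω' ∂μ = -m := by
      rw [hm, ← integral_neg]
      congr 1
      funext ω'
      rw [Finset.sum_neg_distrib]
    rw [hmneg] at hlower
    have hsub : {ω | t ≤ |(∑ i, X i ω) - m|} ⊆
        {ω | t ≤ (∑ i, X i ω) - m} ∪ {ω | t ≤ (∑ i, -X i ω) - -m} := by
      intro ω hω
      rcases le_abs.mp (Set.mem_setOf_eq ▸ hω) with h | h
      · exact Or.inl h
      · right
        show t ≤ (∑ i, -X i ω) - -m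
        rw [Finset.sum_neg_distrib]
        linarith
    have h1 : μ {ω | t ≤ |(∑ i, X i ω) - m|} ≤
        μ {ω | t ≤ (∑ i, X i ω) - m} + μ {ω | t ≤ (∑ i, -X i ω) - -m} :=
      (measure_mono hsub).trans (measure_union_le _ _)
    have h2 : (μ {ω | t ≤ |(∑ i, X i ω) - m|}).toReal ≤
        (μ {ω | t ≤ (∑ i, X i ω) - m}).toReal +
          (μ {ω | t ≤ (∑ i, -X i ω) - -m}).toReal := by
      rw [← ENNReal.toReal_add (measure_ne_top μ _) (measure_ne_top μ _)]
      exact ENNReal.toReal_mono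
        (ENNReal.add_ne_top.mpr ⟨measure_ne_top μ _, measure_ne_top μ _⟩) h1
    linarith
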